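/- arXiv:2105.13828 — 2 statements merged into one kernel-verified Lean document; each statement's English description precedes it below -/
import Mathlib

section
/- Let G be a finite graph, M a set of edges on V(G), and S ⊆ V(G) a set maximizing |S| among all sets minimizing |S| − odd(G \ M − S). Let B be the set of vertices outside S that are not isolated in (G \ M) − S. Then no connected component of (G \ M) induced on B is a tree; i.e., every component of B in G \ M contains a cycle. -/
open SimpleGraph Set

/-- The number of odd components of `H` induced on the complement of `S`. -/
noncomputable def oddComps {V : Type*} [Fintype V] (H : SimpleGraph V) (S : Set V) : ℕ :=
  ({C : (H.induce Sᶜ).ConnectedComponent |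
    Odd (({v : ↥Sᶜ | (H.induce Sᶜ).connectedComponentMk v = C}).ncard)}).ncard

namespace TBAux

variable {V : Type*} {H : SimpleGraph V} {W W' : Set V} {a b c : V}

/-- Reachability within a vertex set `W`. -/
def Rch (H : SimpleGraph V) (W : Set V) (a b : V) : Prop :=
  a ∈ W ∧ ∃ p : H.Walk a b, ∀ x ∈ p.support, x ∈ W

lemma Rch.rfl (ha : a ∈ W) : Rch H W a a :=
  ⟨ha, Walk.nil, fun x hx => by
    rw [Walk.support_nil, List.mem_singleton] at hx; exact hx ▸ ha⟩

lemma Rch.mem_left (h : Rch H W a b) : a ∈ W := h.1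

lemma Rch.mem_right (h : Rch H W a b) : b ∈ W := by
  obtain ⟨_, p, hp⟩ := h; exact hp _ p.end_mem_support

lemma Rch.symm (h : Rch H W a b) : Rch H W b a := by
  obtain ⟨ha, p, hp⟩ := h
  exact ⟨hp _ p.end_mem_support, p.reverse, by simpa [Walk.support_reverse] using hp⟩

lemma Rch.trans (h : Rch H W a b) (h' : Rch H W b c) : Rch H W a c := by
  obtain ⟨ha, p, hp⟩ := h; obtain ⟨hb, q, hq⟩ := h'
  refine ⟨ha, p.append q, fun x hx => ?_⟩
  rw [Walk.mem_support_append_iff] at hx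
  exact hx.elim (hp x) (hq x)

lemma Rch.mono (hW : W ⊆ W') (h : Rch H W a b) : Rch H W' a b := by
  obtain ⟨ha, p, hp⟩ := h
  exact ⟨hW ha, p, fun x hx => hW (hp x hx)⟩

lemma rch_adj (hab : H.Adj a b) (ha : a ∈ W) (hb : b ∈ W) : Rch H W a b := by
  refine ⟨ha, hab.toWalk, fun x hx => ?_⟩
  rw [Adj.toWalk, Walk.support_cons, Walk.support_nil, List.mem_cons, List.mem_singleton] at hx
  rcases hx with rfl | rfl
  · exact ha
  · exact hb

lemma rch_of_mem_support : ∀ {a c : V} (p : H.Walk a c), (∀ x ∈ p.support, x ∈ W) →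
    ∀ x ∈ p.support, Rch H W a x := by
  intro a c p
  induction p with
  | nil =>
    intro hp x hx
    rw [Walk.support_nil, List.mem_singleton] at hx
    subst hx; exact Rch.rfl (hp _ (by simp))
  | @cons u v w h q ih =>
    intro hp x hx
    have hu : u ∈ W := hp _ (Walk.start_mem_support _)
    have hv : v ∈ W := hp _ (by rw [Walk.support_cons]; exact List.mem_cons_of_mem _ q.start_mem_support)
    rw [Walk.support_cons, List.mem_cons] at hx
    rcases hx with hx | hx
    · subst hx; exact Rch.rfl hu
    · exact (rch_adj h hu hv).trans
        (ih (fun y hy => hp y (by rw [Walk.support_cons]; exact List.mem_cons_of_mem _ hy)) x hx)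

/-- The component of `a` within `W`, as a set of vertices of `V`. -/
def cset (H : SimpleGraph V) (W : Set V) (a : V) : Set V := {b | Rch H W a b}

lemma mem_cset_self (ha : a ∈ W) : a ∈ cset H W a := Rch.rfl ha

lemma cset_subset (a : V) : cset H W a ⊆ W := fun _ h => h.mem_right

lemma cset_eq_of_mem (hb : b ∈ cset H W a) : cset H W a = cset H W b := by
  ext z; exact ⟨fun hz => hb.symm.trans hz, fun hz => hb.trans hz⟩

lemma cset_mono (hW : W ⊆ W') (a : V) : cset H W a ⊆ cset H W' a :=
  fun _ h => h.mono hW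

/-- If `v` is not in the component of `a`, removing `v` doesn't change the component. -/
lemma cset_diff_eq {v : V} (hv : v ∉ cset H W a) : cset H W a = cset H (W \ {v}) a := by
  ext z
  constructor
  · rintro ⟨ha, p, hp⟩
    refine ⟨⟨ha, fun hav => hv (hav ▸ mem_cset_self ha)⟩, p, fun x hx => ⟨hp x hx, fun hxv => ?_⟩⟩
    exact hv (hxv ▸ rch_of_mem_support p hp x hx)
  · exact fun h => h.mono diff_subset


section Lift

lemma exists_lift : ∀ {a b : V} (p : H.Walk a b) (_ : ∀ x ∈ p.support, x ∈ W)
    (ha : a ∈ W) (hb : b ∈ W),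
    ∃ q : (H.induce W).Walk ⟨a, ha⟩ ⟨b, hb⟩,
      q.map (SimpleGraph.Embedding.induce W).toHom = p := by
  intro a b p
  induction p with
  | nil => exact fun _ _ _ => ⟨Walk.nil, rfl⟩
  | @cons u v w h q ih =>
    intro hp hu hw
    have hv : v ∈ W := hp _ (by rw [Walk.support_cons]; exact List.mem_cons_of_mem _ q.start_mem_support)
    obtain ⟨q', hq'⟩ := ih (fun y hy => hp y (by rw [Walk.support_cons]; exact List.mem_cons_of_mem _ hy)) hv hw
    refine ⟨Walk.cons (by exact h : (H.induce W).Adj ⟨u, hu⟩ ⟨v, hv⟩) q', ?_⟩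
    subst hq'
    rfl

lemma reachable_induce_iff (ha : a ∈ W) (hb : b ∈ W) :
    (H.induce W).Reachable ⟨a, ha⟩ ⟨b, hb⟩ ↔ Rch H W a b := by
  constructor
  · rintro ⟨q⟩
    refine ⟨ha, q.map (SimpleGraph.Embedding.induce W).toHom, fun x hx => ?_⟩
    erw [Walk.support_map (SimpleGraph.Embedding.induce W).toHom q, List.mem_map] at hx
    obtain ⟨y, _, rfl⟩ := hx
    exact y.2
  · rintro ⟨_, p, hp⟩
    obtain ⟨q, _⟩ := exists_lift p hp ha hb
    exact ⟨q⟩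

lemma image_supp_mk (ha : a ∈ W) :
    Subtype.val '' ((H.induce W).connectedComponentMk ⟨a, ha⟩).supp = cset H W a := by
  ext z
  simp only [Set.mem_image, ConnectedComponent.mem_supp_iff]
  constructor
  · rintro ⟨⟨y, hy⟩, hmk, rfl⟩
    rw [ConnectedComponent.eq] at hmk
    exact ((reachable_induce_iff hy ha).mp hmk).symm
  · intro hz
    refine ⟨⟨z, hz.mem_right⟩, ?_, rfl⟩
    rw [ConnectedComponent.eq]
    exact (reachable_induce_iff hz.mem_right ha).mpr hz.symm

/-- The odd component-sets of `H` within `W`, as sets of vertices. -/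
def oddCompSets (H : SimpleGraph V) (W : Set V) : Set (Set V) :=
  {A | (∃ a ∈ W, A = cset H W a) ∧ Odd A.ncard}

lemma oddComps_eq {V : Type*} [Fintype V] (H : SimpleGraph V) (S : Set V) :
    oddComps H S = (oddCompSets H Sᶜ).ncard := by
  have hinj : Function.Injective
      (fun C : (H.induce Sᶜ).ConnectedComponent => Subtype.val '' C.supp) := by
    intro C D h
    exact ConnectedComponent.supp_injective
      ((Set.image_injective.mpr Subtype.val_injective) h)
  have himg : (fun C : (H.induce Sᶜ).ConnectedComponent => Subtype.val '' C.supp) ''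
      {C | Odd (({v : ↥Sᶜ | (H.induce Sᶜ).connectedComponentMk v = C}).ncard)}
      = oddCompSets H Sᶜ := by
    ext A
    simp only [Set.mem_image, Set.mem_setOf_eq]
    constructor
    · rintro ⟨C, hodd, rfl⟩
      obtain ⟨⟨a, ha⟩, rfl⟩ := C.exists_rep
      change Odd (((H.induce Sᶜ).connectedComponentMk ⟨a, ha⟩).supp).ncard at hodd
      refine ⟨⟨a, ha, image_supp_mk ha⟩, ?_⟩
      show Odd ((Subtype.val '' ((H.induce Sᶜ).connectedComponentMk ⟨a, ha⟩).supp).ncard)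
      rwa [Set.ncard_image_of_injective _ Subtype.val_injective]
    · rintro ⟨⟨a, ha, rfl⟩, hodd⟩
      refine ⟨(H.induce Sᶜ).connectedComponentMk ⟨a, ha⟩, ?_, image_supp_mk ha⟩
      show Odd (((H.induce Sᶜ).connectedComponentMk ⟨a, ha⟩).supp).ncard
      rw [← Set.ncard_image_of_injective _ Subtype.val_injective, image_supp_mk ha]
      exact hodd
  rw [oddComps, ← himg, Set.ncard_image_of_injective _ hinj]

end Lift


section Parity

variable [Fintype V]

lemma odd_parts_parity {x v' : V} (hx : x ∈ W) (hv' : v' ∈ cset H W x) :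
    (Odd (({A ∈ oddCompSets H (W \ {v'}) | A ⊆ cset H W x}).ncard) ↔
      Odd ((cset H W x \ {v'}).ncard)) := by
  classical
  set T := cset H W x with hT
  set W' := W \ {v'} with hW'
  have hTW : T ⊆ W := cset_subset x
  have hTeq : ∀ a ∈ T, cset H W a = T := fun a ha => (cset_eq_of_mem ha).symm
  set parts : Set (Set V) := {A | ∃ a ∈ T \ {v'}, A = cset H W' a} with hparts
  have hpartsub : ∀ A ∈ parts, A ⊆ T \ {v'} := by
    rintro A ⟨a, ⟨haT, hav⟩, rfl⟩ z hz
    have hzW' : z ∈ W' := hz.mem_right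
    have hzT : z ∈ cset H W a := (cset_mono diff_subset a) hz
    exact ⟨(hTeq a haT) ▸ hzT, hzW'.2⟩
  have hmem : ∀ a ∈ T \ {v'}, a ∈ cset H W' a := fun a ha =>
    mem_cset_self ⟨hTW ha.1, ha.2⟩
  -- identify the filtered odd component sets with the odd parts
  have hid : {A ∈ oddCompSets H W' | A ⊆ T} = {A ∈ parts | Odd A.ncard} := by
    ext A
    simp only [Set.mem_setOf_eq, oddCompSets]
    constructor
    · rintro ⟨⟨⟨a, haW', rfl⟩, hodd⟩, hsub⟩
      have haA : a ∈ cset H W' a := mem_cset_self haW'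
      exact ⟨⟨a, ⟨hsub haA, haW'.2⟩, rfl⟩, hodd⟩
    · rintro ⟨⟨a, haT, rfl⟩, hodd⟩
      refine ⟨⟨⟨a, ⟨hTW haT.1, haT.2⟩, rfl⟩, hodd⟩, fun z hz => (hpartsub _ ⟨a, haT, rfl⟩ hz).1⟩
  rw [hid]
  -- move to Finsets
  set P : Finset (Set V) := (Set.toFinite parts).toFinset with hP
  have hbiUnion : (Set.toFinite (T \ {v'})).toFinset
      = P.biUnion (fun A => (Set.toFinite A).toFinset) := by
    ext z
    simp only [Set.Finite.mem_toFinset, Finset.mem_biUnion, hP]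
    constructor
    · intro hz
      exact ⟨cset H W' z, ⟨z, hz, rfl⟩, hmem z hz⟩
    · rintro ⟨A, hA, hzA⟩
      exact hpartsub A hA hzA
  have hdisj : ∀ A ∈ P, ∀ B ∈ P, A ≠ B →
      Disjoint ((Set.toFinite A).toFinset) ((Set.toFinite B).toFinset) := by
    intro A hA B hB hAB
    rw [Set.Finite.mem_toFinset] at hA hB
    obtain ⟨a, _, rfl⟩ := hA
    obtain ⟨b, _, rfl⟩ := hB
    rw [Finset.disjoint_left]
    intro z hza hzb
    rw [Set.Finite.mem_toFinset] at hza hzb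
    exact hAB (by rw [cset_eq_of_mem hza, ← cset_eq_of_mem hzb])
  have hcard := Finset.card_biUnion hdisj
  rw [← hbiUnion] at hcard
  have h1 : (T \ {v'}).ncard = ∑ A ∈ P, A.ncard := by
    rw [Set.ncard_eq_toFinset_card _ (Set.toFinite _), hcard]
    exact Finset.sum_congr rfl fun A _ => (Set.ncard_eq_toFinset_card _ (Set.toFinite _)).symm
  have h2 : ({A ∈ parts | Odd A.ncard}).ncard = (P.filter fun A => Odd A.ncard).card := by
    rw [Set.ncard_eq_toFinset_card _ (Set.toFinite _)]
    congr 1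
    ext A
    simp [hP]
    exact fun _ => Iff.rfl
  rw [h1, h2]
  exact (Finset.odd_sum_iff_odd_card_odd _).symm

end Parity


section Sides

lemma side_cover_aux : ∀ n : ℕ, ∀ {u v t : V}, u ≠ v → u ∈ W → ∀ p : H.Walk u t,
    p.length ≤ n → (∀ z ∈ p.support, z ∈ W) →
    t ∈ cset H (W \ {v}) u ∪ cset H (W \ {u}) v := by
  classical
  intro n
  induction n using Nat.strong_induction_on with
  | _ n ih =>
    intro u v t huv hu p hlen hp
    by_cases hvp : v ∈ p.support
    · have hv : v ∈ W := hp _ hvp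
      have hlt : (p.dropUntil v hvp).length < p.length := by
        have hspec := congrArg Walk.length (p.take_spec hvp)
        rw [Walk.length_append] at hspec
        have h1 : (p.takeUntil v hvp).length ≠ 0 := fun h0 =>
          huv (Walk.eq_of_length_eq_zero h0)
        omega
      have hres := ih (p.dropUntil v hvp).length (lt_of_lt_of_le hlt hlen)
        (Ne.symm huv) hv (p.dropUntil v hvp) le_rfl
        (fun z hz => hp z (Walk.support_dropUntil_subset p hvp hz))
      exact hres.elim (fun h => Or.inr h) (fun h => Or.inl h)
    · left
      refine ⟨⟨hu, fun h => huv (Set.mem_singleton_iff.mp h)⟩, p, fun z hz => ?_⟩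
      exact ⟨hp z hz, fun h => hvp ((Set.mem_singleton_iff.mp h) ▸ hz)⟩

lemma sides_disjoint {u v : V} (huv : H.Adj u v) {T : Set V}
    (hsubu : cset H (W \ {v}) u ⊆ T) (hsubv : cset H (W \ {u}) v ⊆ T) (hvT : v ∈ T)
    (hacyc : ∀ (y : V) (p : H.Walk y y), p.IsCycle → ¬ ∀ z ∈ p.support, z ∈ T) :
    Disjoint (cset H (W \ {v}) u) (cset H (W \ {u}) v) := by
  classical
  rw [Set.disjoint_left]
  rintro t ⟨huW, p, hp⟩ ⟨hvW, q, hq⟩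
  -- `p : u → t` avoiding `v`, `q : v → t` avoiding `u`
  have hup : ∀ z ∈ p.support, z ∈ cset H (W \ {v}) u := fun z hz =>
    rch_of_mem_support p hp z hz
  have hvq : ∀ z ∈ q.support, z ∈ cset H (W \ {u}) v := fun z hz =>
    rch_of_mem_support q hq z hz
  set c : H.Walk u v := p.append q.reverse with hc
  have hedge : s(v, u) ∉ c.edges := by
    intro he
    rw [hc, Walk.edges_append, List.mem_append] at he
    rcases he with he | he
    · exact ((hp v (Walk.fst_mem_support_of_mem_edges p he)).2) rfl
    · rw [Walk.edges_reverse, List.mem_reverse] at he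
      exact ((hq u (Walk.snd_mem_support_of_mem_edges q he)).2) rfl
  have hcyc := SimpleGraph.Path.cons_isCycle c.toPath huv.symm
    (fun he => hedge (Walk.edges_toPath_subset c he))
  refine hacyc v (Walk.cons huv.symm (c.toPath : H.Walk u v)) hcyc ?_
  intro z hz
  rw [Walk.support_cons, List.mem_cons] at hz
  rcases hz with rfl | hz
  · exact hvT
  · have hzc : z ∈ c.support := Walk.support_toPath_subset c hz
    rw [hc, Walk.mem_support_append_iff] at hzc
    rcases hzc with hzc | hzc
    · exact hsubu (hup z hzc)
    · rw [Walk.support_reverse, List.mem_reverse] at hzc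
      exact hsubv (hvq z hzc)

end Sides


section Removal

variable [Fintype V]

lemma split_count {x v' : V} (hx : x ∈ W) (hv' : v' ∈ cset H W x) :
    (oddCompSets H (W \ {v'})).ncard =
      ({A ∈ oddCompSets H (W \ {v'}) | A ⊆ cset H W x}).ncard
        + (oddCompSets H W \ {cset H W x}).ncard := by
  classical
  set T := cset H W x with hTdef
  set m' := oddCompSets H (W \ {v'}) with hm'
  have hE : {A ∈ m' | ¬ A ⊆ T} = oddCompSets H W \ {T} := by
    ext A
    constructor
    · rintro ⟨⟨⟨a, haW', hAa⟩, hodd⟩, hnsub⟩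
      subst hAa
      have hva : v' ∉ cset H W a := by
        intro hva
        have h1 : cset H W a = T := (cset_eq_of_mem hva).trans (cset_eq_of_mem hv').symm
        exact hnsub (h1 ▸ (cset_mono diff_subset a))
      have hAeq : cset H W a = cset H (W \ {v'}) a := cset_diff_eq hva
      refine ⟨⟨⟨a, haW'.1, hAeq.symm⟩, hodd⟩, fun hAT => ?_⟩
      exact hnsub (le_of_eq (Set.mem_singleton_iff.mp hAT))
    · rintro ⟨⟨⟨a, haW, hAa⟩, hodd⟩, hAT⟩
      rw [Set.mem_singleton_iff] at hAT
      subst hAa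
      have haA : a ∈ cset H W a := mem_cset_self haW
      have hva : v' ∉ cset H W a := fun hva =>
        hAT ((cset_eq_of_mem hva).trans (cset_eq_of_mem hv').symm)
      have hAeq : cset H W a = cset H (W \ {v'}) a := cset_diff_eq hva
      have hnsub : ¬ cset H W a ⊆ T := fun hsub =>
        hAT ((cset_eq_of_mem (hsub haA)).symm)
      exact ⟨⟨⟨a, ⟨haW, fun h => hva ((Set.mem_singleton_iff.mp h) ▸ haA)⟩, hAeq⟩, hodd⟩, hnsub⟩
  have hsplit : m' = {A ∈ m' | A ⊆ T} ∪ {A ∈ m' | ¬ A ⊆ T} := by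
    ext A
    by_cases h : A ⊆ T <;> simp [h]
  have hdisj : Disjoint {A ∈ m' | A ⊆ T} {A ∈ m' | ¬ A ⊆ T} := by
    rw [Set.disjoint_left]
    rintro A ⟨_, h⟩ ⟨_, h'⟩
    exact h' h
  rw [← hE]
  conv_lhs => rw [hsplit]
  rw [Set.ncard_union_eq hdisj (Set.toFinite _) (Set.toFinite _)]

lemma exists_removal {x : V} (hx : x ∈ W) (hadj : ∃ u, u ∈ W ∧ H.Adj x u)
    (hacyc : ∀ (y : V) (p : H.Walk y y), p.IsCycle → ¬ ∀ z ∈ p.support, z ∈ cset H W x) :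
    ∃ v' ∈ cset H W x, (oddCompSets H W).ncard + 1 ≤ (oddCompSets H (W \ {v'})).ncard := by
  classical
  set T := cset H W x with hTdef
  have hxT : x ∈ T := mem_cset_self hx
  by_cases hodd : Odd T.ncard
  · -- odd case
    obtain ⟨u₀, hu₀W, hxu₀⟩ := hadj
    have hu₀T : u₀ ∈ T := rch_adj hxu₀ hx hu₀W
    set A : Set V := cset H (W \ {u₀}) x with hA
    set Bs : Set V := cset H (W \ {x}) u₀ with hBs
    have hAT : A ⊆ T := fun z hz => (cset_mono diff_subset x) hz
    have hBT : Bs ⊆ T := by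
      intro z hz
      have hz' : z ∈ cset H W u₀ := (cset_mono diff_subset u₀) hz
      rw [hTdef, cset_eq_of_mem hu₀T]
      exact hz'
    have hcover : T ⊆ A ∪ Bs := by
      rintro t ⟨_, p, hp⟩
      exact side_cover_aux p.length hxu₀.ne hx p le_rfl hp
    have hdisjAB : Disjoint A Bs := sides_disjoint hxu₀ hAT hBT hu₀T hacyc
    have hTAB : T = A ∪ Bs := Set.Subset.antisymm hcover (Set.union_subset hAT hBT)
    have hsum : A.ncard + Bs.ncard = T.ncard := by
      rw [hTAB, Set.ncard_union_eq hdisjAB (Set.toFinite _) (Set.toFinite _)]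
    obtain ⟨u', v', huv', hu'T, hv'T, hodd'⟩ :
        ∃ u' v' : V, H.Adj u' v' ∧ u' ∈ T ∧ v' ∈ T ∧ Odd ((cset H (W \ {v'}) u').ncard) := by
      rcases Nat.even_or_odd A.ncard with hAe | hAo
      · refine ⟨u₀, x, hxu₀.symm, hu₀T, hxT, ?_⟩
        show Odd Bs.ncard
        rw [Nat.odd_iff] at hodd ⊢
        rw [Nat.even_iff] at hAe
        omega
      · exact ⟨x, u₀, hxu₀, hxT, hu₀T, hAo⟩
    refine ⟨v', hv'T, ?_⟩
    have hsc := split_count hx hv'T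
    rw [← hTdef] at hsc
    have hTm : T ∈ oddCompSets H W := ⟨⟨x, hx, hTdef⟩, hodd⟩
    have hdm : (oddCompSets H W \ {T}).ncard + 1 = (oddCompSets H W).ncard :=
      Set.ncard_diff_singleton_add_one hTm (Set.toFinite _)
    have hA'm : cset H (W \ {v'}) u' ∈ {A ∈ oddCompSets H (W \ {v'}) | A ⊆ T} := by
      have hu'W : u' ∈ W := cset_subset x hu'T
      refine ⟨⟨⟨u', ⟨hu'W, fun h => huv'.ne (Set.mem_singleton_iff.mp h)⟩, rfl⟩, hodd'⟩, ?_⟩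
      intro z hz
      have hz' : z ∈ cset H W u' := cset_mono diff_subset u' hz
      rw [hTdef, cset_eq_of_mem hu'T]
      exact hz'
    have hpos : 0 < ({A ∈ oddCompSets H (W \ {v'}) | A ⊆ T}).ncard :=
      (Set.ncard_pos (Set.toFinite _)).mpr ⟨_, hA'm⟩
    have heven : ¬ Odd (({A ∈ oddCompSets H (W \ {v'}) | A ⊆ T}).ncard) := by
      intro hco
      rw [hTdef] at hco
      have hpar := (odd_parts_parity hx hv'T).mp hco
      rw [← hTdef] at hpar
      have h1 := Set.ncard_diff_singleton_add_one hv'T (Set.toFinite T)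
      rw [Nat.odd_iff] at hpar hodd
      omega
    rw [Nat.not_odd_iff_even] at heven
    have h2 : 2 ≤ ({A ∈ oddCompSets H (W \ {v'}) | A ⊆ T}).ncard := by
      rcases heven with ⟨k, hk⟩
      omega
    omega
  · -- even case, take v' = x
    refine ⟨x, hxT, ?_⟩
    have hsc := split_count hx hxT
    rw [← hTdef] at hsc
    have hTm : T ∉ oddCompSets H W := fun hTm => hodd hTm.2
    rw [Set.diff_singleton_eq_self hTm] at hsc
    have hodd' : Odd ((T \ {x}).ncard) := by
      have h1 := Set.ncard_diff_singleton_add_one hxT (Set.toFinite T)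
      have hTpos : 0 < T.ncard := (Set.ncard_pos (Set.toFinite T)).mpr ⟨x, hxT⟩
      rw [Nat.odd_iff] at hodd ⊢
      omega
    have hpos : 1 ≤ ({A ∈ oddCompSets H (W \ {x}) | A ⊆ T}).ncard := by
      have h := (odd_parts_parity hx hxT).mpr (by rw [← hTdef]; exact hodd')
      rw [← hTdef] at h
      rcases h with ⟨k, hk⟩
      omega
    omega

end Removal

end TBAux

theorem tutteBerge_extremal_no_tree_components
    {V : Type*} [Fintype V] (G M : SimpleGraph V) (S : Set V)
    (hmin : ∀ U : Set V,
      (S.ncard : ℤ) - (oddComps (G \ M) S : ℤ) ≤ (U.ncard : ℤ) - (oddComps (G \ M) U : ℤ))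
    (hmax : ∀ U : Set V,
      (U.ncard : ℤ) - (oddComps (G \ M) U : ℤ) =
        (S.ncard : ℤ) - (oddComps (G \ M) S : ℤ) → U.ncard ≤ S.ncard) :
    ∀ C : ((G \ M).induce
        {v : V | v ∉ S ∧ ∃ u, u ∉ S ∧ (G \ M).Adj v u}).ConnectedComponent,
      ∃ (x : {v : V // v ∈ {v : V | v ∉ S ∧ ∃ u, u ∉ S ∧ (G \ M).Adj v u}})
        (w : ((G \ M).induce {v : V | v ∉ S ∧ ∃ u, u ∉ S ∧ (G \ M).Adj v u}).Walk x x),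
        w.IsCycle ∧
        ((G \ M).induce {v : V | v ∉ S ∧ ∃ u, u ∉ S ∧ (G \ M).Adj v u}).connectedComponentMk x
          = C := by
  classical
  set H := G \ M with hH
  set B : Set V := {v : V | v ∉ S ∧ ∃ u, u ∉ S ∧ H.Adj v u} with hB
  intro C
  by_contra hcon
  obtain ⟨x0, rfl⟩ := C.exists_rep
  set x : V := (x0 : V) with hxdef
  have hxB : x ∈ B := x0.2
  have hxW : x ∈ Sᶜ := Set.mem_compl_iff S x |>.mpr hxB.1
  -- the component of x inside Sᶜ is contained in B
  have hTB : TBAux.cset H Sᶜ x ⊆ B := by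
    intro t ht
    by_cases htx : t = x
    · subst htx; exact hxB
    · obtain ⟨htW, q, hq⟩ := ht.symm
      cases q with
      | nil => exact absurd rfl htx
      | @cons _ y _ h q' =>
        refine ⟨Set.mem_compl_iff S t |>.mp htW, y, ?_, h⟩
        have hy : y ∈ Sᶜ := hq y (by
          rw [SimpleGraph.Walk.support_cons]
          exact List.mem_cons_of_mem _ q'.start_mem_support)
        exact Set.mem_compl_iff S y |>.mp hy
  -- no cycles within the component of x
  have hacyc : ∀ (y : V) (p : H.Walk y y), p.IsCycle →
      ¬ ∀ z ∈ p.support, z ∈ TBAux.cset H Sᶜ x := by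
    intro y p hcyc hsupp
    have hyT : y ∈ TBAux.cset H Sᶜ x := hsupp y p.start_mem_support
    have hyB : y ∈ B := hTB hyT
    obtain ⟨q, hq⟩ := TBAux.exists_lift p (fun z hz => hTB (hsupp z hz)) hyB hyB
    have hinj : Function.Injective ((SimpleGraph.Embedding.induce B).toHom :
        (H.induce B) →g H) := Subtype.val_injective
    have hqc : q.IsCycle :=
      (SimpleGraph.Walk.map_isCycle_iff_of_injective hinj).mp (hq.symm ▸ hcyc)
    have hreach : (H.induce B).Reachable ⟨x, hxB⟩ ⟨y, hyB⟩ := by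
      apply (TBAux.reachable_induce_iff hxB hyB).mpr
      obtain ⟨hxW', p', hp'⟩ := hyT
      exact ⟨hxB, p', fun z hz => hTB (TBAux.rch_of_mem_support p' hp' z hz)⟩
    exact hcon ⟨⟨y, hyB⟩, q, hqc, (SimpleGraph.ConnectedComponent.sound hreach.symm)⟩
  -- pick the removal vertex
  obtain ⟨u₁, hu₁S, hxu₁⟩ := hxB.2
  obtain ⟨v', hv'T, hcount⟩ := TBAux.exists_removal hxW
    ⟨u₁, Set.mem_compl_iff S u₁ |>.mpr hu₁S, hxu₁⟩ hacyc
  have hv'S : v' ∉ S := Set.mem_compl_iff S v' |>.mp (TBAux.cset_subset x hv'T)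
  have hins : (insert v' S)ᶜ = Sᶜ \ {v'} := by
    ext z
    simp only [Set.mem_compl_iff, Set.mem_insert_iff, Set.mem_diff,
      Set.mem_singleton_iff, not_or]
    tauto
  have h1 : oddComps H S = (TBAux.oddCompSets H Sᶜ).ncard := TBAux.oddComps_eq H S
  have h2 : oddComps H (insert v' S) = (TBAux.oddCompSets H (Sᶜ \ {v'})).ncard := by
    rw [TBAux.oddComps_eq, hins]
  have hminS := hmin (insert v' S)
  have hcard : (insert v' S).ncard = S.ncard + 1 :=
    Set.ncard_insert_of_notMem hv'S (Set.toFinite S)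
  have heq : ((insert v' S).ncard : ℤ) - (oddComps H (insert v' S) : ℤ)
      = (S.ncard : ℤ) - (oddComps H S : ℤ) := by
    omega
  have hle := hmax (insert v' S) heq
  omega
end

section
/- Fix c ≥ 20 and p = c/n. With high probability as n → ∞, the random graph G(n, c/n) contains no pair of disjoint vertex sets S, T with |S| = |T| ≤ n/(1.25 c³) and |S| ≥ 3 such that every vertex of S has at least 3 neighbors in T. -/
open SimpleGraph Set Filter
open scoped Classical

/-- The weight of a given graph on `[n]` under the Erdős–Rényi measure `G(n,p)`. -/
noncomputable def erWeight (n : ℕ) (p : ℝ) (G : SimpleGraph (Fin n)) : ℝ :=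
  p ^ G.edgeSet.ncard * (1 - p) ^ (n.choose 2 - G.edgeSet.ncard)

/-- The probability that `G(n,p)` satisfies the property `A`. -/
noncomputable def erProb (n : ℕ) (p : ℝ) (A : SimpleGraph (Fin n) → Prop) : ℝ :=
  ∑ G : SimpleGraph (Fin n), if A G then erWeight n p G else 0

noncomputable def allEdges (n : ℕ) : Finset (Sym2 (Fin n)) :=
  (⊤ : SimpleGraph (Fin n)).edgeFinset

lemma card_allEdges (n : ℕ) : (allEdges n).card = n.choose 2 := by
  simpa [allEdges] using
    (SimpleGraph.card_edgeFinset_top_eq_card_choose_two (V := Fin n))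

lemma erWeight_eq (n : ℕ) (p : ℝ) (G : SimpleGraph (Fin n)) :
    erWeight n p G = p ^ G.edgeFinset.card * (1 - p) ^ (n.choose 2 - G.edgeFinset.card) := by
  rw [erWeight, ← SimpleGraph.coe_edgeFinset, Set.ncard_coe_finset]

lemma erWeight_nonneg {n : ℕ} {p : ℝ} (hp0 : 0 ≤ p) (hp1 : p ≤ 1) (G : SimpleGraph (Fin n)) :
    0 ≤ erWeight n p G := by
  have : (0:ℝ) ≤ 1 - p := by linarith
  exact mul_nonneg (pow_nonneg hp0 _) (pow_nonneg this _)

lemma sum_powerset_weight {α : Type*} [DecidableEq α] (U : Finset α) (p : ℝ) :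
    ∑ A ∈ U.powerset, p ^ A.card * (1 - p) ^ (U.card - A.card) = 1 := by
  calc ∑ A ∈ U.powerset, p ^ A.card * (1 - p) ^ (U.card - A.card)
      = ∑ A ∈ U.powerset, (∏ _i ∈ A, p) * ∏ _i ∈ U \ A, (1 - p) := by
        refine Finset.sum_congr rfl fun A hA => ?_
        rw [Finset.prod_const, Finset.prod_const,
          Finset.card_sdiff_of_subset (Finset.mem_powerset.1 hA)]
    _ = ∏ _i ∈ U, (p + (1 - p)) := (Finset.prod_add _ _ _).symm
    _ = 1 := by simp

lemma edgeFinset_mem_powerset {n : ℕ} (G : SimpleGraph (Fin n)) :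
    G.edgeFinset ∈ (allEdges n).powerset := by
  rw [Finset.mem_powerset]
  exact SimpleGraph.edgeFinset_mono le_top

lemma edgeFinset_fromEdgeSet {n : ℕ} (A : Finset (Sym2 (Fin n)))
    (hA : A ∈ (allEdges n).powerset) :
    (SimpleGraph.fromEdgeSet (↑A : Set (Sym2 (Fin n)))).edgeFinset = A := by
  have hnd : ∀ e ∈ A, ¬ e.IsDiag := by
    intro e he
    have := Finset.mem_powerset.1 hA he
    rw [allEdges, SimpleGraph.mem_edgeFinset, SimpleGraph.edgeSet_top] at this
    exact this
  have h1 : (SimpleGraph.fromEdgeSet (↑A : Set (Sym2 (Fin n)))).edgeSet = ↑A := by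
    rw [SimpleGraph.edgeSet_fromEdgeSet]
    ext e
    simp only [Set.mem_diff, Finset.mem_coe, Set.mem_setOf_eq, and_iff_left_iff_imp]
    exact fun he => hnd e he
  rw [SimpleGraph.edgeFinset, Set.toFinset_congr h1]
  exact Finset.toFinset_coe A

/-- Reindex a sum over graphs as a sum over edge-subsets. -/
lemma sum_graphs_eq_sum_powerset {n : ℕ} (F : Finset (Sym2 (Fin n)) → ℝ) :
    ∑ G : SimpleGraph (Fin n), F G.edgeFinset = ∑ A ∈ (allEdges n).powerset, F A := by
  refine Finset.sum_nbij' (i := fun G => G.edgeFinset)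
    (j := fun A => SimpleGraph.fromEdgeSet (↑A : Set (Sym2 (Fin n))))
    (fun G _ => edgeFinset_mem_powerset G) (fun A _ => Finset.mem_univ _)
    (fun G _ => by
      show SimpleGraph.fromEdgeSet (↑G.edgeFinset) = G
      rw [SimpleGraph.coe_edgeFinset, SimpleGraph.fromEdgeSet_edgeSet])
    (fun A hA => by
      have hnd : ∀ e ∈ A, ¬ e.IsDiag := by
        intro e he
        have := Finset.mem_powerset.1 hA he
        rw [allEdges, SimpleGraph.mem_edgeFinset, SimpleGraph.edgeSet_top] at this
        exact this
      ext e
      simp only [SimpleGraph.mem_edgeFinset, SimpleGraph.edgeSet_fromEdgeSet, Set.mem_diff,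
        Finset.mem_coe, Set.mem_setOf_eq]
      exact ⟨fun h => h.1, fun h => ⟨h, hnd e h⟩⟩) (fun G _ => rfl)

lemma erProb_superset {n : ℕ} (p : ℝ) (E₀ : Finset (Sym2 (Fin n)))
    (hE : E₀ ⊆ allEdges n) :
    erProb n p (fun G => E₀ ⊆ G.edgeFinset) = p ^ E₀.card := by
  have key : erProb n p (fun G => E₀ ⊆ G.edgeFinset)
      = ∑ A ∈ (allEdges n).powerset,
          (if E₀ ⊆ A then p ^ A.card * (1 - p) ^ (n.choose 2 - A.card) else 0) := by
    rw [erProb]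
    rw [← sum_graphs_eq_sum_powerset
      (fun A => if E₀ ⊆ A then p ^ A.card * (1 - p) ^ (n.choose 2 - A.card) else 0)]
    refine Finset.sum_congr rfl fun G _ => ?_
    rw [erWeight_eq]
    congr
  rw [key, Finset.sum_ite, Finset.sum_const_zero, add_zero]
  -- now reindex over subsets of allEdges n \ E₀
  have hsub : ∀ B ∈ (allEdges n \ E₀).powerset, E₀ ∪ B ∈
      ((allEdges n).powerset.filter (fun A => E₀ ⊆ A)) := by
    intro B hB
    rw [Finset.mem_filter, Finset.mem_powerset]
    refine ⟨Finset.union_subset hE ((Finset.mem_powerset.1 hB).trans (Finset.sdiff_subset)), 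
      Finset.subset_union_left⟩
  have := Finset.sum_nbij' (i := fun A => A \ E₀) (j := fun B => E₀ ∪ B)
    (s := (allEdges n).powerset.filter (fun A => E₀ ⊆ A))
    (t := (allEdges n \ E₀).powerset)
    (f := fun A => p ^ A.card * (1 - p) ^ (n.choose 2 - A.card))
    (g := fun B => p ^ (E₀.card + B.card) * (1 - p) ^ (n.choose 2 - (E₀.card + B.card)))
    (fun A hA => by
      rw [Finset.mem_filter, Finset.mem_powerset] at hA
      rw [Finset.mem_powerset]
      exact Finset.sdiff_subset_sdiff hA.1 le_rfl)
    (fun B hB => hsub B hB)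
    (fun A hA => by
      rw [Finset.mem_filter] at hA
      exact Finset.union_sdiff_of_subset hA.2)
    (fun B hB => by
      rw [Finset.mem_powerset] at hB
      have : Disjoint E₀ B := Finset.disjoint_left.2 fun e he hB' =>
        (Finset.mem_sdiff.1 (hB hB')).2 he
      show (E₀ ∪ B) \ E₀ = B
      rw [Finset.union_sdiff_cancel_left this])
    (fun A hA => by
      rw [Finset.mem_filter] at hA
      have h3 : E₀.card + (A \ E₀).card = A.card := by
        rw [Finset.card_sdiff_of_subset hA.2]
        exact Nat.add_sub_cancel' (Finset.card_le_card hA.2)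
      show p ^ A.card * (1 - p) ^ (n.choose 2 - A.card)
        = p ^ (E₀.card + (A \ E₀).card) * (1 - p) ^ (n.choose 2 - (E₀.card + (A \ E₀).card))
      rw [h3])
  rw [this]
  have expand : ∀ B ∈ (allEdges n \ E₀).powerset,
      p ^ (E₀.card + B.card) * (1 - p) ^ (n.choose 2 - (E₀.card + B.card))
      = p ^ E₀.card * (p ^ B.card * (1 - p) ^ ((allEdges n \ E₀).card - B.card)) := by
    intro B hB
    rw [Finset.mem_powerset] at hB
    have h1 : (allEdges n \ E₀).card = n.choose 2 - E₀.card := by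
      rw [Finset.card_sdiff_of_subset hE, card_allEdges]
    have h2 : n.choose 2 - (E₀.card + B.card) = (allEdges n \ E₀).card - B.card := by
      rw [h1, Nat.sub_add_eq]
    rw [h2, pow_add, mul_assoc]
  rw [Finset.sum_congr rfl expand, ← Finset.mul_sum, sum_powerset_weight, mul_one]

lemma erProb_congr {n : ℕ} (p : ℝ) {A B : SimpleGraph (Fin n) → Prop}
    (h : ∀ G, A G ↔ B G) : erProb n p A = erProb n p B :=
  Finset.sum_congr rfl fun G _ => if_congr (h G) rfl rfl

lemma erProb_true {n : ℕ} (p : ℝ) : erProb n p (fun _ => True) = 1 := by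
  have h := erProb_superset (n := n) p ∅ (Finset.empty_subset _)
  simp only [Finset.card_empty, pow_zero] at h
  rw [← h]
  exact erProb_congr p fun G => by simp

lemma erProb_nonneg {n : ℕ} {p : ℝ} (hp0 : 0 ≤ p) (hp1 : p ≤ 1)
    (A : SimpleGraph (Fin n) → Prop) : 0 ≤ erProb n p A := by
  refine Finset.sum_nonneg fun G _ => ?_
  split
  · exact erWeight_nonneg hp0 hp1 G
  · exact le_refl 0

lemma erProb_mono {n : ℕ} {p : ℝ} (hp0 : 0 ≤ p) (hp1 : p ≤ 1)
    {A B : SimpleGraph (Fin n) → Prop} (h : ∀ G, A G → B G) :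
    erProb n p A ≤ erProb n p B := by
  refine Finset.sum_le_sum fun G _ => ?_
  by_cases hA : A G
  · rw [if_pos hA, if_pos (h G hA)]
  · rw [if_neg hA]
    split
    · exact erWeight_nonneg hp0 hp1 G
    · exact le_refl 0

lemma erProb_not {n : ℕ} (p : ℝ) (A : SimpleGraph (Fin n) → Prop) :
    erProb n p (fun G => ¬ A G) = 1 - erProb n p A := by
  have h : erProb n p (fun G => ¬ A G) + erProb n p A = 1 := by
    rw [← erProb_true (n := n) p, erProb, erProb, erProb, ← Finset.sum_add_distrib]
    refine Finset.sum_congr rfl fun G _ => ?_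
    by_cases hA : A G <;> simp [hA]
  linarith

lemma erProb_union_bound {n : ℕ} {p : ℝ} (hp0 : 0 ≤ p) (hp1 : p ≤ 1)
    {ι : Type*} (I : Finset ι) (A : ι → SimpleGraph (Fin n) → Prop) :
    erProb n p (fun G => ∃ x ∈ I, A x G) ≤ ∑ x ∈ I, erProb n p (A x) := by
  rw [erProb]
  have swap : ∑ x ∈ I, erProb n p (A x)
      = ∑ G : SimpleGraph (Fin n), ∑ x ∈ I, (if A x G then erWeight n p G else 0) := by
    unfold erProb
    exact Finset.sum_comm
  rw [swap]
  refine Finset.sum_le_sum fun G _ => ?_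
  by_cases hex : ∃ x ∈ I, A x G
  · obtain ⟨x₀, hx₀, hAx₀⟩ := hex
    rw [if_pos ⟨x₀, hx₀, hAx₀⟩]
    calc erWeight n p G = (if A x₀ G then erWeight n p G else 0) := by rw [if_pos hAx₀]
      _ ≤ ∑ x ∈ I, (if A x G then erWeight n p G else 0) := by
          refine Finset.single_le_sum (f := fun x => if A x G then erWeight n p G else 0)
            (fun x _ => ?_) hx₀
          show (0:ℝ) ≤ if A x G then erWeight n p G else 0
          split
          · exact erWeight_nonneg hp0 hp1 G
          · exact le_refl 0
  · rw [if_neg hex]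
    refine Finset.sum_nonneg fun x _ => ?_
    split
    · exact erWeight_nonneg hp0 hp1 G
    · exact le_refl 0
noncomputable def forcedEdges {n : ℕ} (S : Finset (Fin n)) (f : ∀ a ∈ S, Finset (Fin n)) :
    Finset (Sym2 (Fin n)) :=
  S.attach.biUnion fun v => (f v.1 v.2).image fun u => s(v.1, u)

lemma forcedEdges_subset_allEdges {n : ℕ} {S T : Finset (Fin n)} (hST : Disjoint S T)
    (f : ∀ a ∈ S, Finset (Fin n)) (hf : f ∈ S.pi fun _ => Finset.powersetCard 3 T) :
    forcedEdges S f ⊆ allEdges n := by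
  intro e he
  rw [forcedEdges, Finset.mem_biUnion] at he
  obtain ⟨v, -, he⟩ := he
  rw [Finset.mem_image] at he
  obtain ⟨u, hu, rfl⟩ := he
  have huT : u ∈ T := (Finset.mem_powersetCard.1 ((Finset.mem_pi.1 hf) v.1 v.2)).1 hu
  rw [allEdges, SimpleGraph.mem_edgeFinset, SimpleGraph.edgeSet_top]
  simp only [Set.mem_compl_iff, Sym2.mem_diagSet, Sym2.isDiag_iff_proj_eq]
  exact fun h => Finset.disjoint_left.1 hST v.2 (h ▸ huT)

lemma card_forcedEdges {n : ℕ} {S T : Finset (Fin n)} (hST : Disjoint S T)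
    (f : ∀ a ∈ S, Finset (Fin n)) (hf : f ∈ S.pi fun _ => Finset.powersetCard 3 T) :
    (forcedEdges S f).card = 3 * S.card := by
  have hfT : ∀ (v : Fin n) (hv : v ∈ S), f v hv ⊆ T ∧ (f v hv).card = 3 := fun v hv =>
    Finset.mem_powersetCard.1 ((Finset.mem_pi.1 hf) v hv)
  rw [forcedEdges, Finset.card_biUnion]
  · have : ∀ v ∈ S.attach, ((f v.1 v.2).image fun u => s(v.1, u)).card = 3 := by
      intro v _
      rw [Finset.card_image_of_injOn, (hfT v.1 v.2).2]
      intro u _ u' _ h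
      rcases Sym2.eq_iff.1 h with ⟨-, h2⟩ | ⟨h1, h2⟩
      · exact h2
      · exact h2.trans h1
    rw [Finset.sum_congr rfl this, Finset.sum_const, Finset.card_attach, smul_eq_mul,
      Nat.mul_comm]
  · intro v _ w _ hvw
    refine Finset.disjoint_left.2 fun e he he' => ?_
    rw [Finset.mem_image] at he he'
    obtain ⟨u, hu, rfl⟩ := he
    obtain ⟨u', hu', he'⟩ := he'
    have huT : u ∈ T := (hfT v.1 v.2).1 hu
    have hu'T : u' ∈ T := (hfT w.1 w.2).1 hu'
    rcases Sym2.eq_iff.1 he'.symm with ⟨h1, -⟩ | ⟨h1, h2⟩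
    · exact hvw (Subtype.ext h1)
    · exact Finset.disjoint_left.1 hST w.2 (h2 ▸ huT)

lemma pair_prob_le {n : ℕ} {p : ℝ} (hp0 : 0 ≤ p) (hp1 : p ≤ 1)
    {S T : Finset (Fin n)} (hST : Disjoint S T) :
    erProb n p (fun G => ∀ v ∈ S, 3 ≤ (T.filter (fun u => G.Adj v u)).card)
      ≤ (T.card.choose 3 : ℝ) ^ S.card * p ^ (3 * S.card) := by
  have step1 : ∀ G : SimpleGraph (Fin n),
      (∀ v ∈ S, 3 ≤ (T.filter (fun u => G.Adj v u)).card) →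
      ∃ f ∈ S.pi fun _ => Finset.powersetCard 3 T, forcedEdges S f ⊆ G.edgeFinset := by
    intro G hG
    have hch : ∀ (v : Fin n), v ∈ S → ∃ t ⊆ T.filter (fun u => G.Adj v u), t.card = 3 :=
      fun v hv => Finset.exists_subset_card_eq (hG v hv)
    refine ⟨fun v hv => (hch v hv).choose, ?_, ?_⟩
    · rw [Finset.mem_pi]
      intro v hv
      obtain ⟨hsub, hcard⟩ := (hch v hv).choose_spec
      exact Finset.mem_powersetCard.2 ⟨hsub.trans (Finset.filter_subset _ _), hcard⟩
    · intro e he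
      rw [forcedEdges, Finset.mem_biUnion] at he
      obtain ⟨v, -, he⟩ := he
      rw [Finset.mem_image] at he
      obtain ⟨u, hu, rfl⟩ := he
      have := (hch v.1 v.2).choose_spec.1 hu
      rw [Finset.mem_filter] at this
      rw [SimpleGraph.mem_edgeFinset, SimpleGraph.mem_edgeSet]
      exact this.2
  calc erProb n p (fun G => ∀ v ∈ S, 3 ≤ (T.filter (fun u => G.Adj v u)).card)
      ≤ erProb n p (fun G => ∃ f ∈ S.pi fun _ => Finset.powersetCard 3 T,
          forcedEdges S f ⊆ G.edgeFinset) := erProb_mono hp0 hp1 step1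
    _ ≤ ∑ f ∈ S.pi fun _ => Finset.powersetCard 3 T,
          erProb n p (fun G => forcedEdges S f ⊆ G.edgeFinset) :=
        erProb_union_bound hp0 hp1 _ _
    _ = ∑ f ∈ S.pi fun _ => Finset.powersetCard 3 T, p ^ (3 * S.card) := by
        refine Finset.sum_congr rfl fun f hf => ?_
        rw [erProb_superset p _ (forcedEdges_subset_allEdges hST f hf),
          card_forcedEdges hST f hf]
    _ = (T.card.choose 3 : ℝ) ^ S.card * p ^ (3 * S.card) := by
        rw [Finset.sum_const, nsmul_eq_mul, Finset.card_pi]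
        simp only [Finset.card_powersetCard]
        rw [Finset.prod_const]
        push_cast
        ring
lemma bad_prob_le (c : ℝ) (hc : 0 < c) (n : ℕ) (hcn : (c : ℝ) ≤ n) :
    erProb n (c / n) (fun G =>
      ∃ S T : Finset (Fin n), Disjoint S T ∧ S.card = T.card ∧
        (S.card : ℝ) ≤ (n : ℝ) / (1.25 * c ^ 3) ∧ 3 ≤ S.card ∧
        ∀ v ∈ S, 3 ≤ (T.filter (fun u => G.Adj v u)).card)
      ≤ ∑ s ∈ Finset.Icc 3 (⌊(n : ℝ) / (1.25 * c ^ 3)⌋₊),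
          (n.choose s : ℝ) ^ 2 * (s.choose 3 : ℝ) ^ s * (c / n) ^ (3 * s) := by
  have hn0 : (0:ℝ) < n := lt_of_lt_of_le hc hcn
  have hp0 : (0:ℝ) ≤ c / n := div_nonneg hc.le hn0.le
  have hp1 : c / n ≤ 1 := (div_le_one hn0).2 hcn
  set p : ℝ := c / n with hp
  set M : ℕ := ⌊(n : ℝ) / (1.25 * c ^ 3)⌋₊ with hM
  set I : Finset (Finset (Fin n) × Finset (Fin n)) :=
    Finset.univ.filter (fun x => Disjoint x.1 x.2 ∧ x.1.card = x.2.card ∧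
      (x.1.card : ℝ) ≤ (n : ℝ) / (1.25 * c ^ 3) ∧ 3 ≤ x.1.card) with hI
  have hiff : ∀ G : SimpleGraph (Fin n),
      (∃ S T : Finset (Fin n), Disjoint S T ∧ S.card = T.card ∧
        (S.card : ℝ) ≤ (n : ℝ) / (1.25 * c ^ 3) ∧ 3 ≤ S.card ∧
        ∀ v ∈ S, 3 ≤ (T.filter (fun u => G.Adj v u)).card)
      ↔ ∃ x ∈ I, ∀ v ∈ x.1, 3 ≤ (x.2.filter (fun u => G.Adj v u)).card := by
    intro G
    constructor
    · rintro ⟨S, T, h1, h2, h3, h4, h5⟩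
      exact ⟨(S, T), Finset.mem_filter.2 ⟨Finset.mem_univ _, h1, h2, h3, h4⟩, h5⟩
    · rintro ⟨x, hx, h5⟩
      rw [hI, Finset.mem_filter] at hx
      exact ⟨x.1, x.2, hx.2.1, hx.2.2.1, hx.2.2.2.1, hx.2.2.2.2, h5⟩
  rw [erProb_congr p hiff]
  calc erProb n p (fun G => ∃ x ∈ I, ∀ v ∈ x.1, 3 ≤ (x.2.filter (fun u => G.Adj v u)).card)
      ≤ ∑ x ∈ I, erProb n p (fun G => ∀ v ∈ x.1, 3 ≤ (x.2.filter (fun u => G.Adj v u)).card) :=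
        erProb_union_bound hp0 hp1 _ _
    _ ≤ ∑ x ∈ I, (x.1.card.choose 3 : ℝ) ^ x.1.card * p ^ (3 * x.1.card) := by
        refine Finset.sum_le_sum fun x hx => ?_
        rw [hI, Finset.mem_filter] at hx
        have := pair_prob_le hp0 hp1 hx.2.1
        rwa [← hx.2.2.1] at this
    _ = ∑ s ∈ Finset.Icc 3 M, ∑ x ∈ I.filter (fun x => x.1.card = s),
          (x.1.card.choose 3 : ℝ) ^ x.1.card * p ^ (3 * x.1.card) := by
        refine (Finset.sum_fiberwise_of_maps_to ?_ _).symm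
        intro x hx
        rw [hI, Finset.mem_filter] at hx
        rw [Finset.mem_Icc]
        exact ⟨hx.2.2.2.2, Nat.le_floor hx.2.2.2.1⟩
    _ ≤ ∑ s ∈ Finset.Icc 3 M,
          (n.choose s : ℝ) ^ 2 * (s.choose 3 : ℝ) ^ s * p ^ (3 * s) := by
        refine Finset.sum_le_sum fun s _ => ?_
        have hterm : ∀ x ∈ I.filter (fun x => x.1.card = s),
            (x.1.card.choose 3 : ℝ) ^ x.1.card * p ^ (3 * x.1.card)
            = (s.choose 3 : ℝ) ^ s * p ^ (3 * s) := by
          intro x hx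
          rw [(Finset.mem_filter.1 hx).2]
        rw [Finset.sum_congr rfl hterm, Finset.sum_const, nsmul_eq_mul, mul_assoc]
        have hcardle : ((I.filter (fun x => x.1.card = s)).card : ℝ) ≤ (n.choose s : ℝ) ^ 2 := by
          have hsub : I.filter (fun x => x.1.card = s) ⊆
              (Finset.powersetCard s Finset.univ) ×ˢ (Finset.powersetCard s Finset.univ) := by
            intro x hx
            rw [Finset.mem_filter, hI, Finset.mem_filter] at hx
            rw [Finset.mem_product, Finset.mem_powersetCard, Finset.mem_powersetCard]
            exact ⟨⟨Finset.subset_univ _, hx.2⟩,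
              ⟨Finset.subset_univ _, hx.1.2.2.1 ▸ hx.2⟩⟩
          have := Finset.card_le_card hsub
          rw [Finset.card_product, Finset.card_powersetCard, Finset.card_univ,
            Fintype.card_fin] at this
          calc ((I.filter (fun x => x.1.card = s)).card : ℝ)
              ≤ ((n.choose s) * (n.choose s) : ℕ) := by exact_mod_cast this
            _ = (n.choose s : ℝ) ^ 2 := by push_cast; ring
        refine mul_le_mul_of_nonneg_right hcardle ?_
        exact mul_nonneg (pow_nonneg (by positivity) _) (pow_nonneg hp0 _)
lemma pow_self_le_exp_mul_factorial : ∀ s : ℕ, (s : ℝ) ^ s ≤ Real.exp 1 ^ s * (s.factorial : ℝ)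
  | 0 => by norm_num
  | (s+1) => by
    rcases Nat.eq_zero_or_pos s with rfl | hs
    · simpa using Real.one_le_exp (by norm_num)
    have hs0 : (0:ℝ) < s := by exact_mod_cast hs
    have hbase : ((s:ℝ) + 1) ^ s ≤ Real.exp 1 * (s:ℝ) ^ s := by
      have h1 : ((s:ℝ) + 1) = (s:ℝ) * (1 + 1/s) := by field_simp
      have h2 : (1 + 1/(s:ℝ)) ^ s ≤ Real.exp 1 := by
        have h3 : (1 + 1/(s:ℝ)) ≤ Real.exp (1/s) := by
          have := Real.add_one_le_exp (1/(s:ℝ))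
          linarith
        calc (1 + 1/(s:ℝ)) ^ s ≤ Real.exp (1/s) ^ s := by
              apply pow_le_pow_left₀ (by positivity) h3
          _ = Real.exp ((s : ℝ) * (1/s)) := by rw [Real.exp_nat_mul]
          _ = Real.exp 1 := by rw [mul_one_div, div_self (ne_of_gt hs0)]
      calc ((s:ℝ) + 1) ^ s = (s:ℝ) ^ s * (1 + 1/s) ^ s := by rw [h1, mul_pow]
        _ ≤ (s:ℝ) ^ s * Real.exp 1 := by
            exact mul_le_mul_of_nonneg_left h2 (by positivity)
        _ = Real.exp 1 * (s:ℝ) ^ s := mul_comm _ _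
    have ih := pow_self_le_exp_mul_factorial s
    have hpos : (0:ℝ) < (s:ℝ) + 1 := by positivity
    calc ((s+1 : ℕ) : ℝ) ^ (s+1) = ((s:ℝ) + 1) * ((s:ℝ) + 1) ^ s := by push_cast; ring
      _ ≤ ((s:ℝ) + 1) * (Real.exp 1 * (s:ℝ) ^ s) :=
          mul_le_mul_of_nonneg_left hbase hpos.le
      _ ≤ ((s:ℝ) + 1) * (Real.exp 1 * (Real.exp 1 ^ s * s.factorial)) := by
          refine mul_le_mul_of_nonneg_left (mul_le_mul_of_nonneg_left ih ?_) hpos.le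
          exact (Real.exp_pos 1).le
      _ = Real.exp 1 ^ (s+1) * (((s:ℝ) + 1) * s.factorial) := by ring
      _ = Real.exp 1 ^ (s+1) * ((s+1).factorial : ℝ) := by
          rw [Nat.factorial_succ]; push_cast; ring

lemma choose_le_epow {n s : ℕ} (hs : 1 ≤ s) :
    (n.choose s : ℝ) ≤ (Real.exp 1 * n / s) ^ s := by
  have h1 : (n.choose s : ℝ) ≤ (n : ℝ) ^ s / (s.factorial : ℝ) := Nat.choose_le_pow_div s n
  have hs0 : (0:ℝ) < (s:ℝ) := by exact_mod_cast hs
  have hf : (0:ℝ) < (s.factorial : ℝ) := by exact_mod_cast s.factorial_pos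
  have h2 : (n : ℝ) ^ s / (s.factorial : ℝ) ≤ (Real.exp 1 * n / s) ^ s := by
    rw [div_le_iff₀ hf]
    have key := pow_self_le_exp_mul_factorial s
    have hss : (0:ℝ) < (s:ℝ) ^ s := by positivity
    have expand : (Real.exp 1 * n / s) ^ s = Real.exp 1 ^ s * (n:ℝ) ^ s / (s:ℝ) ^ s := by
      rw [div_pow, mul_pow]
    rw [expand, div_mul_eq_mul_div, le_div_iff₀ hss]
    calc (n:ℝ) ^ s * (s:ℝ) ^ s ≤ (n:ℝ) ^ s * (Real.exp 1 ^ s * s.factorial) :=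
          mul_le_mul_of_nonneg_left key (by positivity)
      _ = Real.exp 1 ^ s * (n:ℝ) ^ s * (s.factorial : ℝ) := by ring
  exact h1.trans h2

lemma choose_three_le (s : ℕ) : (s.choose 3 : ℝ) ≤ (s : ℝ) ^ 3 / 6 := by
  have h1 : s.descFactorial 3 = 6 * s.choose 3 := by
    rw [Nat.descFactorial_eq_factorial_mul_choose]
    norm_num [Nat.factorial]
  have h2 : s.descFactorial 3 ≤ s ^ 3 := Nat.descFactorial_le_pow s 3
  have : (6:ℝ) * (s.choose 3 : ℝ) ≤ (s:ℝ) ^ 3 := by exact_mod_cast h1 ▸ h2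
  linarith

lemma geom_sum_le_inv (r : ℝ) (hr0 : 0 ≤ r) (hr1 : r < 1) (N : ℕ) :
    ∑ i ∈ Finset.range N, r ^ i ≤ 1 / (1 - r) := by
  have h1r : (0:ℝ) < 1 - r := by linarith
  rw [geom_sum_eq (ne_of_lt hr1) N]
  have heq : (r ^ N - 1)/(r - 1) = (1 - r ^ N)/(1 - r) := by
    rw [← neg_div_neg_eq]
    ring_nf
  rw [heq]
  have : (0:ℝ) ≤ r ^ N := pow_nonneg hr0 N
  gcongr <;> linarith
lemma exp_sq_lt : Real.exp 1 ^ 2 < 7.5 := by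
  have h := Real.exp_one_lt_d9
  have h0 := Real.exp_pos 1
  nlinarith

lemma sum_bound (c : ℝ) (hc : 20 ≤ c) (n : ℕ) (hn : 1 ≤ n) :
    ∑ s ∈ Finset.Icc 3 (⌊(n : ℝ) / (1.25 * c ^ 3)⌋₊),
        (n.choose s : ℝ) ^ 2 * (s.choose 3 : ℝ) ^ s * (c / n) ^ (3 * s)
    ≤ ((Real.exp 1 ^ 2 * c ^ 3 / (6 * n) * (Nat.sqrt n : ℝ)) ^ 3
        + (Real.exp 1 ^ 2 / 7.5) ^ (Nat.sqrt n)) / (1 - Real.exp 1 ^ 2 / 7.5) := by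
  set E : ℝ := Real.exp 1 with hE
  set r : ℝ := E ^ 2 / 7.5 with hr
  set γ : ℝ := E ^ 2 * c ^ 3 / (6 * n) with hγ
  set Q : ℕ := Nat.sqrt n with hQ
  set M : ℕ := ⌊(n : ℝ) / (1.25 * c ^ 3)⌋₊ with hM
  have hc0 : (0:ℝ) < c := by linarith
  have hn0 : (0:ℝ) < n := by exact_mod_cast hn
  have hE0 : (0:ℝ) < E := Real.exp_pos 1
  have hr0 : (0:ℝ) < r := by positivity
  have hr1 : r < 1 := by
    rw [hr, div_lt_one (by norm_num)]
    exact exp_sq_lt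
  have hγ0 : (0:ℝ) ≤ γ := by positivity
  have hMle : (M : ℝ) ≤ (n : ℝ) / (1.25 * c ^ 3) := Nat.floor_le (by positivity)
  have hkey : γ * ((n : ℝ) / (1.25 * c ^ 3)) = r := by
    rw [hγ, hr]
    field_simp
    ring
  have hrs : ∀ s ∈ Finset.Icc 3 M, γ * (s : ℝ) ≤ r := by
    intro s hs
    rw [Finset.mem_Icc] at hs
    have h1 : (s : ℝ) ≤ (M : ℝ) := by exact_mod_cast hs.2
    calc γ * (s:ℝ) ≤ γ * ((n : ℝ) / (1.25 * c ^ 3)) :=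
          mul_le_mul_of_nonneg_left (h1.trans hMle) hγ0
      _ = r := hkey
  have hterm : ∀ s ∈ Finset.Icc 3 M,
      (n.choose s : ℝ) ^ 2 * (s.choose 3 : ℝ) ^ s * (c / n) ^ (3 * s) ≤ (γ * s) ^ s := by
    intro s hs
    rw [Finset.mem_Icc] at hs
    have hs1 : 1 ≤ s := le_trans (by norm_num) hs.1
    have hs0 : (0:ℝ) < (s:ℝ) := by exact_mod_cast hs1
    have h1 : (n.choose s : ℝ) ^ 2 ≤ ((E * n / s) ^ 2) ^ s := by
      rw [← pow_right_comm]
      exact pow_le_pow_left₀ (by positivity) (choose_le_epow hs1) 2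
    have h2 : (s.choose 3 : ℝ) ^ s ≤ ((s:ℝ) ^ 3 / 6) ^ s :=
      pow_le_pow_left₀ (by positivity) (choose_three_le s) s
    have h3 : (c / (n:ℝ)) ^ (3 * s) = ((c / n) ^ 3) ^ s := by rw [pow_mul]
    have hbase : (E * n / s) ^ 2 * ((s:ℝ) ^ 3 / 6) * ((c / n) ^ 3) = γ * s := by
      rw [hγ]
      field_simp
    calc (n.choose s : ℝ) ^ 2 * (s.choose 3 : ℝ) ^ s * (c / n) ^ (3 * s)
        ≤ ((E * n / s) ^ 2) ^ s * ((s:ℝ) ^ 3 / 6) ^ s * ((c / n) ^ 3) ^ s := by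
          rw [h3]
          refine mul_le_mul (mul_le_mul h1 h2 (by positivity) (by positivity))
            le_rfl (by positivity) (by positivity)
      _ = ((E * n / s) ^ 2 * ((s:ℝ) ^ 3 / 6) * ((c / n) ^ 3)) ^ s := by
          rw [mul_pow, mul_pow]
      _ = (γ * s) ^ s := by rw [hbase]
  have hsum1 : ∑ s ∈ Finset.Icc 3 M,
      (n.choose s : ℝ) ^ 2 * (s.choose 3 : ℝ) ^ s * (c / n) ^ (3 * s)
      ≤ ∑ s ∈ Finset.Icc 3 M, (γ * s) ^ s := Finset.sum_le_sum hterm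
  -- split the sum
  have hsplit : ∑ s ∈ Finset.Icc 3 M, (γ * s) ^ s
      = ∑ s ∈ (Finset.Icc 3 M).filter (fun s => s ≤ Q), (γ * s) ^ s
        + ∑ s ∈ (Finset.Icc 3 M).filter (fun s => ¬ s ≤ Q), (γ * s) ^ s :=
    (Finset.sum_filter_add_sum_filter_not _ _ _).symm
  have hgeom : ∀ N : ℕ, ∑ i ∈ Finset.range N, r ^ i ≤ 1 / (1 - r) :=
    geom_sum_le_inv r hr0.le hr1
  -- part 1
  have hpart1 : ∑ s ∈ (Finset.Icc 3 M).filter (fun s => s ≤ Q), (γ * s) ^ s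
      ≤ (γ * Q) ^ 3 * (1 / (1 - r)) := by
    have hterm1 : ∀ s ∈ (Finset.Icc 3 M).filter (fun s => s ≤ Q),
        (γ * s) ^ s ≤ (γ * Q) ^ 3 * r ^ (s - 3) := by
      intro s hs
      rw [Finset.mem_filter] at hs
      obtain ⟨hsIcc, hsQ⟩ := hs
      have hs3 : 3 ≤ s := (Finset.mem_Icc.1 hsIcc).1
      have hsplit2 : (γ * s) ^ s = (γ * s) ^ 3 * (γ * s) ^ (s - 3) := by
        rw [← pow_add]
        congr 1
        omega
      have hsQ' : γ * (s:ℝ) ≤ γ * (Q:ℝ) :=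
        mul_le_mul_of_nonneg_left (by exact_mod_cast hsQ) hγ0
      rw [hsplit2]
      refine mul_le_mul (pow_le_pow_left₀ (by positivity) hsQ' 3)
        (pow_le_pow_left₀ (by positivity) (hrs s hsIcc) _) (by positivity) (by positivity)
    calc ∑ s ∈ (Finset.Icc 3 M).filter (fun s => s ≤ Q), (γ * s) ^ s
        ≤ ∑ s ∈ (Finset.Icc 3 M).filter (fun s => s ≤ Q), (γ * Q) ^ 3 * r ^ (s - 3) :=
          Finset.sum_le_sum hterm1
      _ ≤ ∑ s ∈ Finset.Icc 3 M, (γ * Q) ^ 3 * r ^ (s - 3) := by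
          refine Finset.sum_le_sum_of_subset_of_nonneg (Finset.filter_subset _ _) ?_
          intro s _ _
          positivity
      _ = (γ * Q) ^ 3 * ∑ s ∈ Finset.Icc 3 M, r ^ (s - 3) := by rw [Finset.mul_sum]
      _ ≤ (γ * Q) ^ 3 * (1 / (1 - r)) := by
          refine mul_le_mul_of_nonneg_left ?_ (by positivity)
          rw [← Finset.Ico_add_one_right_eq_Icc, Finset.sum_Ico_eq_sum_range]
          have : ∀ i ∈ Finset.range (M + 1 - 3), r ^ (3 + i - 3) = r ^ i := by
            intro i _
            congr 1
            omega
          rw [Finset.sum_congr rfl this]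
          exact hgeom _
  -- part 2
  have hpart2 : ∑ s ∈ (Finset.Icc 3 M).filter (fun s => ¬ s ≤ Q), (γ * s) ^ s
      ≤ r ^ Q * (1 / (1 - r)) := by
    have hsub : (Finset.Icc 3 M).filter (fun s => ¬ s ≤ Q) ⊆ Finset.Icc (Q+1) M := by
      intro s hs
      rw [Finset.mem_filter, Finset.mem_Icc] at hs
      rw [Finset.mem_Icc]
      omega
    calc ∑ s ∈ (Finset.Icc 3 M).filter (fun s => ¬ s ≤ Q), (γ * s) ^ s
        ≤ ∑ s ∈ (Finset.Icc 3 M).filter (fun s => ¬ s ≤ Q), r ^ s := by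
          refine Finset.sum_le_sum fun s hs => ?_
          rw [Finset.mem_filter] at hs
          exact pow_le_pow_left₀ (by positivity) (hrs s hs.1) s
      _ ≤ ∑ s ∈ Finset.Icc (Q+1) M, r ^ s := by
          refine Finset.sum_le_sum_of_subset_of_nonneg hsub ?_
          intro s _ _
          positivity
      _ = ∑ i ∈ Finset.range (M + 1 - (Q+1)), r ^ (Q + 1 + i) := by
          rw [← Finset.Ico_add_one_right_eq_Icc, Finset.sum_Ico_eq_sum_range]
      _ = r ^ (Q+1) * ∑ i ∈ Finset.range (M + 1 - (Q+1)), r ^ i := by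
          rw [Finset.mul_sum]
          exact Finset.sum_congr rfl fun i _ => by rw [← pow_add]
      _ ≤ r ^ (Q+1) * (1 / (1 - r)) :=
          mul_le_mul_of_nonneg_left (hgeom _) (by positivity)
      _ ≤ r ^ Q * (1 / (1 - r)) := by
          refine mul_le_mul_of_nonneg_right ?_
            (div_nonneg zero_le_one (by linarith))
          exact pow_le_pow_of_le_one hr0.le hr1.le (Nat.le_succ Q)
  calc ∑ s ∈ Finset.Icc 3 M,
      (n.choose s : ℝ) ^ 2 * (s.choose 3 : ℝ) ^ s * (c / n) ^ (3 * s)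
      ≤ ∑ s ∈ Finset.Icc 3 M, (γ * s) ^ s := hsum1
    _ ≤ (γ * Q) ^ 3 * (1 / (1 - r)) + r ^ Q * (1 / (1 - r)) := by
        rw [hsplit]
        exact add_le_add hpart1 hpart2
    _ = ((γ * Q) ^ 3 + r ^ Q) / (1 - r) := by ring
lemma sqrt_tendsto_atTop : Tendsto (fun n : ℕ => Nat.sqrt n) atTop atTop := by
  refine Filter.tendsto_atTop_atTop.2 fun b => ⟨b * b, fun n hn => ?_⟩
  exact Nat.le_sqrt.2 hn

lemma bound_tendsto_zero (c : ℝ) (hc : 20 ≤ c) :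
    Tendsto (fun n : ℕ => ((Real.exp 1 ^ 2 * c ^ 3 / (6 * n) * (Nat.sqrt n : ℝ)) ^ 3
        + (Real.exp 1 ^ 2 / 7.5) ^ (Nat.sqrt n)) / (1 - Real.exp 1 ^ 2 / 7.5))
      atTop (nhds 0) := by
  set E : ℝ := Real.exp 1 with hE
  set r : ℝ := E ^ 2 / 7.5 with hr
  have hE0 : (0:ℝ) < E := Real.exp_pos 1
  have hr0 : (0:ℝ) < r := by positivity
  have hr1 : r < 1 := by
    rw [hr, div_lt_one (by norm_num)]
    exact exp_sq_lt
  have hc0 : (0:ℝ) < c := by linarith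
  have h1 : Tendsto (fun n : ℕ => E ^ 2 * c ^ 3 / (6 * n) * (Nat.sqrt n : ℝ))
      atTop (nhds 0) := by
    have hub : ∀ᶠ n : ℕ in atTop,
        E ^ 2 * c ^ 3 / (6 * n) * (Nat.sqrt n : ℝ) ≤ E ^ 2 * c ^ 3 / 6 * (1 / (Nat.sqrt n : ℝ)) := by
      filter_upwards [eventually_ge_atTop 1] with n hn
      have hq1 : 1 ≤ Nat.sqrt n := Nat.le_sqrt.2 (by omega)
      have hq0 : (0:ℝ) < (Nat.sqrt n : ℝ) := by exact_mod_cast hq1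
      have hn0 : (0:ℝ) < (n : ℝ) := by exact_mod_cast hn
      have hqq : (Nat.sqrt n : ℝ) * (Nat.sqrt n : ℝ) ≤ (n : ℝ) := by
        exact_mod_cast Nat.sqrt_le n
      have hfrac : (Nat.sqrt n : ℝ) / n ≤ 1 / (Nat.sqrt n : ℝ) := by
        rw [div_le_div_iff₀ hn0 hq0]
        nlinarith
      calc E ^ 2 * c ^ 3 / (6 * n) * (Nat.sqrt n : ℝ)
          = E ^ 2 * c ^ 3 / 6 * ((Nat.sqrt n : ℝ) / n) := by
            field_simp
        _ ≤ E ^ 2 * c ^ 3 / 6 * (1 / (Nat.sqrt n : ℝ)) :=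
            mul_le_mul_of_nonneg_left hfrac (by positivity)
    have hlb : ∀ᶠ n : ℕ in atTop,
        (0:ℝ) ≤ E ^ 2 * c ^ 3 / (6 * n) * (Nat.sqrt n : ℝ) := by
      filter_upwards [eventually_ge_atTop 1] with n hn
      have hn0 : (0:ℝ) < (n : ℝ) := by exact_mod_cast hn
      positivity
    have hrhs : Tendsto (fun n : ℕ => E ^ 2 * c ^ 3 / 6 * (1 / (Nat.sqrt n : ℝ)))
        atTop (nhds 0) := by
      have : Tendsto (fun n : ℕ => 1 / (Nat.sqrt n : ℝ)) atTop (nhds 0) :=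
        tendsto_one_div_atTop_nhds_zero_nat.comp sqrt_tendsto_atTop
      simpa using this.const_mul (E ^ 2 * c ^ 3 / 6)
    exact tendsto_of_tendsto_of_tendsto_of_le_of_le' tendsto_const_nhds hrhs hlb hub
  have h2 : Tendsto (fun n : ℕ => (E ^ 2 * c ^ 3 / (6 * n) * (Nat.sqrt n : ℝ)) ^ 3)
      atTop (nhds 0) := by
    have := h1.pow 3
    simpa using this
  have h3 : Tendsto (fun n : ℕ => r ^ (Nat.sqrt n)) atTop (nhds 0) :=
    (tendsto_pow_atTop_nhds_zero_of_lt_one hr0.le hr1).comp sqrt_tendsto_atTop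
  have h4 := (h2.add h3).div_const (1 - r)
  simpa using h4

theorem whp_no_small_set_with_three_neighbors (c : ℝ) (hc : 20 ≤ c) :
    Tendsto (fun n : ℕ => erProb n (c / n) (fun G =>
      ¬ ∃ S T : Finset (Fin n), Disjoint S T ∧ S.card = T.card ∧
        (S.card : ℝ) ≤ (n : ℝ) / (1.25 * c ^ 3) ∧ 3 ≤ S.card ∧
        ∀ v ∈ S, 3 ≤ (T.filter (fun u => G.Adj v u)).card))
      atTop (nhds 1) := by
  have hc0 : (0:ℝ) < c := by linarith
  have hev : ∀ᶠ n : ℕ in atTop, (c : ℝ) ≤ n ∧ 1 ≤ n := by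
    filter_upwards [eventually_ge_atTop (⌈c⌉₊ + 1)] with n hn
    constructor
    · calc c ≤ (⌈c⌉₊ : ℝ) := Nat.le_ceil c
        _ ≤ n := by exact_mod_cast (by omega : ⌈c⌉₊ ≤ n)
    · omega
  have key : Tendsto (fun n : ℕ => erProb n (c / n) (fun G =>
      ∃ S T : Finset (Fin n), Disjoint S T ∧ S.card = T.card ∧
        (S.card : ℝ) ≤ (n : ℝ) / (1.25 * c ^ 3) ∧ 3 ≤ S.card ∧
        ∀ v ∈ S, 3 ≤ (T.filter (fun u => G.Adj v u)).card)) atTop (nhds 0) := by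
    refine tendsto_of_tendsto_of_tendsto_of_le_of_le' tendsto_const_nhds
      (bound_tendsto_zero c hc) ?_ ?_
    · filter_upwards [hev] with n hn
      have hn0 : (0:ℝ) < n := lt_of_lt_of_le hc0 hn.1
      exact erProb_nonneg (div_nonneg hc0.le hn0.le) ((div_le_one hn0).2 hn.1) _
    · filter_upwards [hev] with n hn
      exact (bad_prob_le c hc0 n hn.1).trans (sum_bound c hc n hn.2)
  have lim1 : Tendsto (fun n : ℕ => 1 - erProb n (c / n) (fun G =>
      ∃ S T : Finset (Fin n), Disjoint S T ∧ S.card = T.card ∧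
        (S.card : ℝ) ≤ (n : ℝ) / (1.25 * c ^ 3) ∧ 3 ≤ S.card ∧
        ∀ v ∈ S, 3 ≤ (T.filter (fun u => G.Adj v u)).card)) atTop (nhds 1) := by
    have h5 : Tendsto (fun _ : ℕ => (1:ℝ)) atTop (nhds 1) := tendsto_const_nhds
    have := h5.sub key
    simpa using this
  exact lim1.congr fun n => (erProb_not _ _).symm
end
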